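/- Let D be a decoherence map on a nonempty compact convex set Ω in a finite-dimensional real vector space V. Then D maps the intrinsic (relative) interior of Ω into itself: if ρ lies in the intrinsic interior of Ω then so does D(ρ). Consequently, every face F of Ω with D(Ω) ⊆ F satisfies F = Ω. -/

import Mathlib

/-- `s` refines `x` (written `s ≻ x`) relative to the convex set `Ω`:
there exist `p ∈ (0,1]` and `t ∈ Ω` with `x = p • s + (1-p) • t`. -/
def Refines {V : Type*} [AddCommGroup V] [Module ℝ V] (Ω : Set V) (s x : V) : Prop :=
  ∃ p : ℝ, 0 < p ∧ p ≤ 1 ∧ ∃ t ∈ Ω, x = p • s + (1 - p) • t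

/-- The refinement set of `x` in `Ω`: all states of `Ω` refining `x`. -/
def RefSet {V : Type*} [AddCommGroup V] [Module ℝ V] (Ω : Set V) (x : V) : Set V :=
  {s ∈ Ω | Refines Ω s x}

/-- `F` is a face of `Ω`: a convex subset of `Ω` closed under refinement. -/
def IsFaceOf {V : Type*} [AddCommGroup V] [Module ℝ V] (F Ω : Set V) : Prop :=
  F ⊆ Ω ∧ Convex ℝ F ∧ ∀ s' ∈ F, ∀ s ∈ Ω, Refines Ω s s' → s ∈ F

/-- A decoherence map on `Ω`: a linear map sending `Ω` into itself, idempotent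
on `Ω`, and purity-decreasing (if `D ρ ≻ ρ` then `ρ ≻ D ρ`). -/
def IsDecoherence {V : Type*} [AddCommGroup V] [Module ℝ V]
    (Ω : Set V) (D : V →ₗ[ℝ] V) : Prop :=
  D '' Ω ⊆ Ω ∧ (∀ s ∈ Ω, D (D s) = D s) ∧
    ∀ ρ ∈ Ω, Refines Ω (D ρ) ρ → Refines Ω ρ (D ρ)

section Helpers
variable {V : Type*} [NormedAddCommGroup V] [NormedSpace ℝ V]

lemma mem_intrinsicInterior_iff_nhds (Ω : Set V) (ρ : V) :
    ρ ∈ intrinsicInterior ℝ Ω ↔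
      ρ ∈ affineSpan ℝ Ω ∧ ∀ᶠ y in nhds ρ, y ∈ affineSpan ℝ Ω → y ∈ Ω := by
  rw [mem_intrinsicInterior]
  constructor
  · rintro ⟨y, hy, rfl⟩
    refine ⟨y.2, ?_⟩
    rw [mem_interior_iff_mem_nhds, nhds_induced, Filter.mem_comap] at hy
    obtain ⟨U, hU, hUsub⟩ := hy
    filter_upwards [hU] with z hz hzspan
    exact hUsub (show (⟨z, hzspan⟩ : affineSpan ℝ Ω) ∈ Subtype.val ⁻¹' U from hz)
  · rintro ⟨hρ, h⟩
    refine ⟨⟨ρ, hρ⟩, ?_, rfl⟩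
    rw [mem_interior_iff_mem_nhds, nhds_induced, Filter.mem_comap]
    exact ⟨_, h, fun z hz => hz z.2⟩

lemma refines_of_mem_intrinsicInterior {Ω : Set V} {ρ s : V}
    (hρ : ρ ∈ intrinsicInterior ℝ Ω) (hs : s ∈ Ω) : Refines Ω s ρ := by
  rw [mem_intrinsicInterior_iff_nhds] at hρ
  obtain ⟨hspan, hev⟩ := hρ
  have htend : Filter.Tendsto (fun ε : ℝ => ρ + ε • (ρ - s)) (nhdsWithin 0 (Set.Ioi 0)) (nhds ρ) := by
    have hc : Continuous (fun ε : ℝ => ρ + ε • (ρ - s)) :=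
      continuous_const.add (continuous_id.smul continuous_const)
    have := hc.tendsto 0
    simp only [zero_smul, add_zero] at this
    exact this.mono_left nhdsWithin_le_nhds
  have hmemspan : ∀ ε : ℝ, ρ + ε • (ρ - s) ∈ affineSpan ℝ Ω := by
    intro ε
    have := AffineMap.lineMap_mem (k := ℝ) (1 + ε) (subset_affineSpan ℝ Ω hs) hspan
    simpa [AffineMap.lineMap_apply] using (by module :
      ρ + ε • (ρ - s) = (1 + ε) • (ρ - s) + s) ▸ this
  have : ∀ᶠ ε : ℝ in nhdsWithin 0 (Set.Ioi 0),
      (ρ + ε • (ρ - s) ∈ Ω) ∧ 0 < ε := by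
    filter_upwards [htend.eventually hev, self_mem_nhdsWithin] with ε h1 h2
    exact ⟨h1 (hmemspan ε), h2⟩
  obtain ⟨ε, htΩ, hε⟩ := this.exists
  have h1ε : (0:ℝ) < 1 + ε := by linarith
  refine ⟨ε / (1 + ε), by positivity, by
    rw [div_le_one h1ε]; linarith, ρ + ε • (ρ - s), htΩ, ?_⟩
  match_scalars <;> field_simp <;> ring

lemma combo_mem_intrinsicInterior {Ω : Set V} (hconv : Convex ℝ Ω) {ρ t : V} {p : ℝ}
    (hρ : ρ ∈ intrinsicInterior ℝ Ω) (ht : t ∈ Ω) (hp0 : 0 < p) (hp1 : p ≤ 1) :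
    p • ρ + (1 - p) • t ∈ intrinsicInterior ℝ Ω := by
  rw [mem_intrinsicInterior_iff_nhds] at hρ ⊢
  obtain ⟨hspan, hev⟩ := hρ
  constructor
  · have := AffineMap.lineMap_mem (k := ℝ) p (subset_affineSpan ℝ Ω ht) hspan
    simpa [AffineMap.lineMap_apply] using (by module :
      p • ρ + (1 - p) • t = p • (ρ - t) + t) ▸ this
  · set g := fun z : V => p⁻¹ • z + (1 - p⁻¹) • t with hg
    have hgc : Continuous g := (continuous_id.const_smul _).add continuous_const
    have hgx : g (p • ρ + (1 - p) • t) = ρ := by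
      simp only [hg]; match_scalars <;> field_simp <;> ring
    have htend : Filter.Tendsto g (nhds (p • ρ + (1 - p) • t)) (nhds ρ) := by
      have := hgc.tendsto (p • ρ + (1 - p) • t)
      rwa [hgx] at this
    filter_upwards [htend.eventually hev] with z hz hzspan
    have hgz : g z ∈ affineSpan ℝ Ω := by
      have := AffineMap.lineMap_mem (k := ℝ) p⁻¹ (subset_affineSpan ℝ Ω ht) hzspan
      simpa [AffineMap.lineMap_apply] using (by module :
        g z = p⁻¹ • (z - t) + t) ▸ this
    have hgΩ : g z ∈ Ω := hz hgz
    have : z = p • g z + (1 - p) • t := by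
      simp only [hg]; match_scalars <;> field_simp <;> ring
    rw [this]
    exact hconv hgΩ ht hp0.le (by linarith) (by ring)

end Helpers

/-- a decoherence map sends the intrinsic (relative) interior of
`Ω` into itself; consequently every face of `Ω` containing `D '' Ω` is all
of `Ω`. -/
theorem decoherence_preserves_intrinsicInterior {V : Type*} [NormedAddCommGroup V]
    [NormedSpace ℝ V] [FiniteDimensional ℝ V]
    (Ω : Set V) (hne : Ω.Nonempty) (hcomp : IsCompact Ω) (hconv : Convex ℝ Ω)
    (D : V →ₗ[ℝ] V) (hD : IsDecoherence Ω D) :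
    (∀ ρ ∈ intrinsicInterior ℝ Ω, D ρ ∈ intrinsicInterior ℝ Ω) ∧
    (∀ F : Set V, IsFaceOf F Ω → D '' Ω ⊆ F → F = Ω) := by
  obtain ⟨hmaps, hidem, hpd⟩ := hD
  have part1 : ∀ ρ ∈ intrinsicInterior ℝ Ω, D ρ ∈ intrinsicInterior ℝ Ω := by
    intro ρ hρ
    have hρΩ : ρ ∈ Ω := intrinsicInterior_subset hρ
    have hDρΩ : D ρ ∈ Ω := hmaps ⟨ρ, hρΩ, rfl⟩
    obtain ⟨p, hp0, hp1, t, htΩ, heq⟩ :=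
      hpd ρ hρΩ (refines_of_mem_intrinsicInterior hρ hDρΩ)
    rw [heq]
    exact combo_mem_intrinsicInterior hconv hρ htΩ hp0 hp1
  refine ⟨part1, fun F hF hDF => ?_⟩
  obtain ⟨ρ₀, hρ₀⟩ := hne.intrinsicInterior hconv
  refine Set.Subset.antisymm hF.1 fun s hs => ?_
  exact hF.2.2 (D ρ₀) (hDF ⟨ρ₀, intrinsicInterior_subset hρ₀, rfl⟩) s hs
    (refines_of_mem_intrinsicInterior (part1 ρ₀ hρ₀) hs)
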